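/- arXiv:1108.5348 — 3 statements merged into one kernel-verified Lean document; each statement's English description precedes it below -/
import Mathlib

section
/- A perfect cuboid exists if and only if there exist positive integers a, b, c, u satisfying a < c, b < c, u < c and (a + c)·(b + c) > 2·c², such that u⁴a⁴b⁴ + 6a⁴u²b⁴c² − 2u⁴a⁴b²c² − 2u⁴a²b⁴c² + 4u²b⁴a²c⁴ + 4a⁴u²b²c⁴ − 12u⁴a²b²c⁴ + u⁴a⁴c⁴ + u⁴b⁴c⁴ + a⁴b⁴c⁴ + 6a⁴u²c⁶ + 6u²b⁴c⁶ − 8a²b²u²c⁶ − 2u⁴a²c⁶ − 2u⁴b²c⁶ − 2a⁴b²c⁶ − 2b⁴a²c⁶ + u⁴c⁸ + b⁴c⁸ + a⁴c⁸ + 4a²u²c⁸ + 4b²u²c⁸ − 12a²b²c⁸ + 6u²c¹⁰ − 2a²c¹⁰ − 2b²c¹⁰ + c¹² = 0. -/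
set_option maxHeartbeats 4000000


/-- A perfect cuboid: positive integer edges whose three face diagonals
and space diagonal are (positive) integers. -/
def PerfectCuboid : Prop :=
  ∃ x₁ x₂ x₃ d₁ d₂ d₃ L : ℤ,
    0 < x₁ ∧ 0 < x₂ ∧ 0 < x₃ ∧ 0 < d₁ ∧ 0 < d₂ ∧ 0 < d₃ ∧ 0 < L ∧
    x₂ ^ 2 + x₃ ^ 2 = d₁ ^ 2 ∧ x₃ ^ 2 + x₁ ^ 2 = d₂ ^ 2 ∧
    x₁ ^ 2 + x₂ ^ 2 = d₃ ^ 2 ∧ x₁ ^ 2 + x₂ ^ 2 + x₃ ^ 2 = L ^ 2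

/-- The degree-12 cuboid polynomial, as a function. -/
private def cubPoly (a b c u : ℤ) : ℤ :=
  u ^ 4 * a ^ 4 * b ^ 4 + 6 * a ^ 4 * u ^ 2 * b ^ 4 * c ^ 2
    - 2 * u ^ 4 * a ^ 4 * b ^ 2 * c ^ 2 - 2 * u ^ 4 * a ^ 2 * b ^ 4 * c ^ 2
    + 4 * u ^ 2 * b ^ 4 * a ^ 2 * c ^ 4 + 4 * a ^ 4 * u ^ 2 * b ^ 2 * c ^ 4
    - 12 * u ^ 4 * a ^ 2 * b ^ 2 * c ^ 4
    + u ^ 4 * a ^ 4 * c ^ 4 + u ^ 4 * b ^ 4 * c ^ 4 + a ^ 4 * b ^ 4 * c ^ 4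
    + 6 * a ^ 4 * u ^ 2 * c ^ 6 + 6 * u ^ 2 * b ^ 4 * c ^ 6
    - 8 * a ^ 2 * b ^ 2 * u ^ 2 * c ^ 6
    - 2 * u ^ 4 * a ^ 2 * c ^ 6 - 2 * u ^ 4 * b ^ 2 * c ^ 6
    - 2 * a ^ 4 * b ^ 2 * c ^ 6 - 2 * b ^ 4 * a ^ 2 * c ^ 6
    + u ^ 4 * c ^ 8 + b ^ 4 * c ^ 8 + a ^ 4 * c ^ 8
    + 4 * a ^ 2 * u ^ 2 * c ^ 8 + 4 * b ^ 2 * u ^ 2 * c ^ 8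
    - 12 * a ^ 2 * b ^ 2 * c ^ 8
    + 6 * u ^ 2 * c ^ 10 - 2 * a ^ 2 * c ^ 10 - 2 * b ^ 2 * c ^ 10
    + c ^ 12

/-- Core Pythagorean computation with the three factor substitutions abstracted. -/
private lemma pyth_core (x₁ x₃ d₂ L S T R : ℤ) (h2 : x₃ ^ 2 + x₁ ^ 2 = d₂ ^ 2) :
    ((2*x₃*(S*(T^2*R^2)))*((2*L*(T*(S^2*R^2)))*(2*L*(R*(S^2*T^2)))))^2
      + ((2*L*(S*(T^2*R^2)))*((2*x₁*(T*(S^2*R^2)))*(2*L*(R*(S^2*T^2)))))^2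
      - ((2*L*(S*(T^2*R^2)))*((2*L*(T*(S^2*R^2)))*(2*d₂*(R*(S^2*T^2)))))^2 = 0 := by
  linear_combination (64*L^4*S^10*T^10*R^10) * h2

/-- The cuboid polynomial vanishes once the six quadratic factors are rewritten. -/
private lemma fwd_core (a b c u m1 m2 m3 m4 m5 m6 : ℤ)
    (e1 : c^2 - a^2 = m1) (e2 : c^2 + a^2 = m2) (e3 : c^2 - b^2 = m3)
    (e4 : c^2 + b^2 = m4) (e5 : c^2 - u^2 = m5) (e6 : c^2 + u^2 = m6)
    (h : (m1*(m4*m6))^2 + (m2*(m3*m6))^2 - (m2*(m4*m5))^2 = 0) :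
    cubPoly a b c u = 0 := by
  have key : cubPoly a b c u
      = ((c^2-a^2)*((c^2+b^2)*(c^2+u^2)))^2 + ((c^2+a^2)*((c^2-b^2)*(c^2+u^2)))^2
        - ((c^2+a^2)*((c^2+b^2)*(c^2-u^2)))^2 := by
    unfold cubPoly; ring
  rw [key, e1, e2, e3, e4, e5, e6, h]

/-- The inequality constraint is a consequence of the equation. -/
private lemma ineq_core (a b c u : ℤ) (ha : 0 < a) (hb : 0 < b) (hc : 0 < c) (hu : 0 < u)
    (hac : a < c) (hbc : b < c) (hT : cubPoly a b c u = 0) :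
    (a + c) * (b + c) > 2 * c ^ 2 := by
  have key : (c^2 - a*b - (a+b)*c) *
      ((c^2 - a*b + (a+b)*c) * ((c^2 + a*b - (a-b)*c) * ((c^2 + a*b + (a-b)*c) * (u^4 + c^4))))
      = -(6*c^10 + 4*a^2*c^8 + 4*b^2*c^8 + 6*a^4*c^6 + 6*b^4*c^6 - 8*a^2*b^2*c^6
          + 4*a^2*b^4*c^4 + 4*a^4*b^2*c^4 + 6*a^4*b^4*c^2) * u^2 := by
    have : cubPoly a b c u = 0 := hT
    unfold cubPoly at this
    linear_combination this
  have hq : (0:ℤ) < 6*c^10 + 4*a^2*c^8 + 4*b^2*c^8 + 6*a^4*c^6 + 6*b^4*c^6 - 8*a^2*b^2*c^6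
      + 4*a^2*b^4*c^4 + 4*a^4*b^2*c^4 + 6*a^4*b^4*c^2 := by
    nlinarith [mul_pos (mul_pos (pow_pos ha 2) (pow_pos hc 6))
                 (show (0:ℤ) < c^2 - b^2 by nlinarith),
               mul_pos (mul_pos (pow_pos hb 2) (pow_pos hc 6))
                 (show (0:ℤ) < c^2 - a^2 by nlinarith),
               pow_pos hc 10,
               mul_pos (mul_pos (pow_pos ha 4) (pow_pos hb 4)) (pow_pos hc 2),
               mul_pos (mul_pos (pow_pos ha 2) (pow_pos hb 4)) (pow_pos hc 4),
               mul_pos (mul_pos (pow_pos ha 4) (pow_pos hb 2)) (pow_pos hc 4),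
               mul_pos (pow_pos ha 4) (pow_pos hc 6),
               mul_pos (pow_pos hb 4) (pow_pos hc 6)]
  have f2 : (0:ℤ) < c^2 - a*b + (a+b)*c := by
    nlinarith [mul_lt_mul'' hac hbc ha.le hb.le, mul_pos (add_pos ha hb) hc]
  have f3 : (0:ℤ) < c^2 + a*b - (a-b)*c := by
    nlinarith [mul_pos (sub_pos.mpr hac) hc, mul_pos hb (add_pos ha hc)]
  have f4 : (0:ℤ) < c^2 + a*b + (a-b)*c := by
    nlinarith [mul_pos (sub_pos.mpr hbc) hc, mul_pos ha (add_pos hb hc)]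
  have fu : (0:ℤ) < u^4 + c^4 := by positivity
  have hP : (0:ℤ) < (c^2 - a*b + (a+b)*c) *
      ((c^2 + a*b - (a-b)*c) * ((c^2 + a*b + (a-b)*c) * (u^4 + c^4))) :=
    mul_pos f2 (mul_pos f3 (mul_pos f4 fu))
  have hF1 : c^2 - a*b - (a+b)*c < 0 := by
    by_contra hge
    push_neg at hge
    have h0 := mul_nonneg hge hP.le
    nlinarith [key, h0, mul_pos hq (pow_pos hu 2)]
  nlinarith [hF1]

theorem perfect_cuboid_iff_diophantine :
    PerfectCuboid ↔
      ∃ a b c u : ℤ, 0 < a ∧ 0 < b ∧ 0 < c ∧ 0 < u ∧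
        a < c ∧ b < c ∧ u < c ∧ (a + c) * (b + c) > 2 * c ^ 2 ∧
        u ^ 4 * a ^ 4 * b ^ 4 + 6 * a ^ 4 * u ^ 2 * b ^ 4 * c ^ 2
          - 2 * u ^ 4 * a ^ 4 * b ^ 2 * c ^ 2 - 2 * u ^ 4 * a ^ 2 * b ^ 4 * c ^ 2
          + 4 * u ^ 2 * b ^ 4 * a ^ 2 * c ^ 4 + 4 * a ^ 4 * u ^ 2 * b ^ 2 * c ^ 4
          - 12 * u ^ 4 * a ^ 2 * b ^ 2 * c ^ 4
          + u ^ 4 * a ^ 4 * c ^ 4 + u ^ 4 * b ^ 4 * c ^ 4 + a ^ 4 * b ^ 4 * c ^ 4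
          + 6 * a ^ 4 * u ^ 2 * c ^ 6 + 6 * u ^ 2 * b ^ 4 * c ^ 6
          - 8 * a ^ 2 * b ^ 2 * u ^ 2 * c ^ 6
          - 2 * u ^ 4 * a ^ 2 * c ^ 6 - 2 * u ^ 4 * b ^ 2 * c ^ 6
          - 2 * a ^ 4 * b ^ 2 * c ^ 6 - 2 * b ^ 4 * a ^ 2 * c ^ 6
          + u ^ 4 * c ^ 8 + b ^ 4 * c ^ 8 + a ^ 4 * c ^ 8
          + 4 * a ^ 2 * u ^ 2 * c ^ 8 + 4 * b ^ 2 * u ^ 2 * c ^ 8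
          - 12 * a ^ 2 * b ^ 2 * c ^ 8
          + 6 * u ^ 2 * c ^ 10 - 2 * a ^ 2 * c ^ 10 - 2 * b ^ 2 * c ^ 10
          + c ^ 12 = 0 := by
  constructor
  · rintro ⟨x₁, x₂, x₃, d₁, d₂, d₃, L, hx1, hx2, hx3, hd1, hd2, hd3, hL, h1, h2, h3, h4⟩
    -- a = d₃·t·r, b = d₁·s·r, c = s·t·r, u = x₂·s·t  with s = x₃+L, t = x₁+L, r = d₂+L
    have hs : (0:ℤ) < x₃ + L := add_pos hx3 hL
    have ht : (0:ℤ) < x₁ + L := add_pos hx1 hL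
    have hr : (0:ℤ) < d₂ + L := add_pos hd2 hL
    have hd3L : d₃ < L := by nlinarith [hd3, hL, pow_pos hx3 2]
    have hd1L : d₁ < L := by nlinarith [hd1, hL, pow_pos hx1 2]
    have hx2L : x₂ < L := by nlinarith [hx2, hL, pow_pos hx3 2, pow_pos hx1 2]
    have ha : (0:ℤ) < d₃ * ((x₁ + L) * (d₂ + L)) := mul_pos hd3 (mul_pos ht hr)
    have hb : (0:ℤ) < d₁ * ((x₃ + L) * (d₂ + L)) := mul_pos hd1 (mul_pos hs hr)
    have hc : (0:ℤ) < (x₃ + L) * ((x₁ + L) * (d₂ + L)) := mul_pos hs (mul_pos ht hr)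
    have hu : (0:ℤ) < x₂ * ((x₃ + L) * (x₁ + L)) := mul_pos hx2 (mul_pos hs ht)
    have hac : d₃ * ((x₁ + L) * (d₂ + L)) < (x₃ + L) * ((x₁ + L) * (d₂ + L)) := by
      have : d₃ < x₃ + L := by linarith
      exact mul_lt_mul_of_pos_right this (mul_pos ht hr)
    have hbc : d₁ * ((x₃ + L) * (d₂ + L)) < (x₃ + L) * ((x₁ + L) * (d₂ + L)) := by
      nlinarith [mul_pos (mul_pos hs hr) (show (0:ℤ) < x₁ + L - d₁ by linarith)]
    have huc : x₂ * ((x₃ + L) * (x₁ + L)) < (x₃ + L) * ((x₁ + L) * (d₂ + L)) := by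
      nlinarith [mul_pos (mul_pos hs ht) (show (0:ℤ) < d₂ + L - x₂ by linarith)]
    have e1 : ((x₃ + L) * ((x₁ + L) * (d₂ + L)))^2 - (d₃ * ((x₁ + L) * (d₂ + L)))^2
        = 2*x₃*((x₃ + L)*((x₁ + L)^2*(d₂ + L)^2)) := by
      linear_combination ((x₁ + L)^2*(d₂ + L)^2) * h3 - ((x₁ + L)^2*(d₂ + L)^2) * h4
    have e2 : ((x₃ + L) * ((x₁ + L) * (d₂ + L)))^2 + (d₃ * ((x₁ + L) * (d₂ + L)))^2
        = 2*L*((x₃ + L)*((x₁ + L)^2*(d₂ + L)^2)) := by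
      linear_combination ((x₁ + L)^2*(d₂ + L)^2) * h4 - ((x₁ + L)^2*(d₂ + L)^2) * h3
    have e3 : ((x₃ + L) * ((x₁ + L) * (d₂ + L)))^2 - (d₁ * ((x₃ + L) * (d₂ + L)))^2
        = 2*x₁*((x₁ + L)*((x₃ + L)^2*(d₂ + L)^2)) := by
      linear_combination ((x₃ + L)^2*(d₂ + L)^2) * h1 - ((x₃ + L)^2*(d₂ + L)^2) * h4
    have e4 : ((x₃ + L) * ((x₁ + L) * (d₂ + L)))^2 + (d₁ * ((x₃ + L) * (d₂ + L)))^2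
        = 2*L*((x₁ + L)*((x₃ + L)^2*(d₂ + L)^2)) := by
      linear_combination ((x₃ + L)^2*(d₂ + L)^2) * h4 - ((x₃ + L)^2*(d₂ + L)^2) * h1
    have e5 : ((x₃ + L) * ((x₁ + L) * (d₂ + L)))^2 - (x₂ * ((x₃ + L) * (x₁ + L)))^2
        = 2*d₂*((d₂ + L)*((x₃ + L)^2*(x₁ + L)^2)) := by
      linear_combination ((x₃ + L)^2*(x₁ + L)^2) * h2 - ((x₃ + L)^2*(x₁ + L)^2) * h4
    have e6 : ((x₃ + L) * ((x₁ + L) * (d₂ + L)))^2 + (x₂ * ((x₃ + L) * (x₁ + L)))^2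
        = 2*L*((d₂ + L)*((x₃ + L)^2*(x₁ + L)^2)) := by
      linear_combination ((x₃ + L)^2*(x₁ + L)^2) * h4 - ((x₃ + L)^2*(x₁ + L)^2) * h2
    have hT : cubPoly (d₃ * ((x₁ + L) * (d₂ + L))) (d₁ * ((x₃ + L) * (d₂ + L)))
        ((x₃ + L) * ((x₁ + L) * (d₂ + L))) (x₂ * ((x₃ + L) * (x₁ + L))) = 0 := by
      exact fwd_core _ _ _ _ _ _ _ _ _ _ e1 e2 e3 e4 e5 e6
        (pyth_core x₁ x₃ d₂ L (x₃ + L) (x₁ + L) (d₂ + L) h2)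
    refine ⟨d₃ * ((x₁ + L) * (d₂ + L)), d₁ * ((x₃ + L) * (d₂ + L)),
      (x₃ + L) * ((x₁ + L) * (d₂ + L)), x₂ * ((x₃ + L) * (x₁ + L)),
      ha, hb, hc, hu, hac, hbc, huc,
      ineq_core _ _ _ _ ha hb hc hu hac hbc hT, hT⟩
  · rintro ⟨a, b, c, u, ha, hb, hc, hu, hac, hbc, huc, _, heq⟩
    have hca : (0:ℤ) < c^2 - a^2 := by nlinarith
    have hcb : (0:ℤ) < c^2 - b^2 := by nlinarith
    have hcu : (0:ℤ) < c^2 - u^2 := by nlinarith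
    have hpa : (0:ℤ) < c^2 + a^2 := by positivity
    have hpb : (0:ℤ) < c^2 + b^2 := by positivity
    have hpu : (0:ℤ) < c^2 + u^2 := by positivity
    refine ⟨(c^2 + a^2) * ((c^2 - b^2) * (c^2 + u^2)),
      2*u*c * ((c^2 + a^2) * (c^2 + b^2)),
      (c^2 - a^2) * ((c^2 + b^2) * (c^2 + u^2)),
      2*b*c * ((c^2 + a^2) * (c^2 + u^2)),
      (c^2 + a^2) * ((c^2 + b^2) * (c^2 - u^2)),
      2*a*c * ((c^2 + b^2) * (c^2 + u^2)),
      (c^2 + a^2) * ((c^2 + b^2) * (c^2 + u^2)),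
      mul_pos hpa (mul_pos hcb hpu),
      mul_pos (by positivity) (mul_pos hpa hpb),
      mul_pos hca (mul_pos hpb hpu),
      mul_pos (by positivity) (mul_pos hpa hpu),
      mul_pos hpa (mul_pos hpb hcu),
      mul_pos (by positivity) (mul_pos hpb hpu),
      mul_pos hpa (mul_pos hpb hpu),
      ?_, ?_, ?_, ?_⟩
    · linear_combination heq
    · linear_combination heq
    · linear_combination heq
    · linear_combination heq
end

section
/- A perfect cuboid exists if and only if there exist positive integers a, b, u with gcd(a, b, u) = 1 and a rational number t satisfying t > a, t > b, t > u and (a + t)·(b + t) > 2·t², such that P_{a,b,u}(t) = 0. -/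
open Polynomial

/-- The cuboid polynomial `P_{a,b,u}(t) ∈ ℤ[t]`. -/
noncomputable def cuboidPoly (a b u : ℤ) : Polynomial ℤ :=
  X ^ 12 + C (6 * u ^ 2 - 2 * a ^ 2 - 2 * b ^ 2) * X ^ 10
    + C (u ^ 4 + b ^ 4 + a ^ 4 + 4 * a ^ 2 * u ^ 2 + 4 * b ^ 2 * u ^ 2
        - 12 * a ^ 2 * b ^ 2) * X ^ 8
    + C (6 * a ^ 4 * u ^ 2 + 6 * b ^ 4 * u ^ 2 - 8 * a ^ 2 * b ^ 2 * u ^ 2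
        - 2 * a ^ 2 * u ^ 4 - 2 * b ^ 2 * u ^ 4 - 2 * a ^ 4 * b ^ 2
        - 2 * a ^ 2 * b ^ 4) * X ^ 6
    + C (4 * a ^ 2 * b ^ 4 * u ^ 2 + 4 * a ^ 4 * b ^ 2 * u ^ 2
        - 12 * a ^ 2 * b ^ 2 * u ^ 4 + a ^ 4 * u ^ 4 + b ^ 4 * u ^ 4
        + a ^ 4 * b ^ 4) * X ^ 4
    + C (6 * a ^ 4 * b ^ 4 * u ^ 2 - 2 * a ^ 4 * b ^ 2 * u ^ 4
        - 2 * a ^ 2 * b ^ 4 * u ^ 4) * X ^ 2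
    + C (a ^ 4 * b ^ 4 * u ^ 4)

set_option maxHeartbeats 1000000

lemma cuboidPoly_aeval (a b u : ℤ) (t : ℚ) :
    Polynomial.aeval t (cuboidPoly a b u) =
      (t^2 - (a:ℚ)^2)^2 * (t^2 + (b:ℚ)^2)^2 * (t^2 + (u:ℚ)^2)^2
      + (t^2 + (a:ℚ)^2)^2 * (t^2 - (b:ℚ)^2)^2 * (t^2 + (u:ℚ)^2)^2
      - (t^2 + (a:ℚ)^2)^2 * (t^2 + (b:ℚ)^2)^2 * (t^2 - (u:ℚ)^2)^2 := by
  simp only [cuboidPoly, map_add, map_mul, map_pow, aeval_X, aeval_C]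
  push_cast
  norm_num
  ring

theorem perfect_cuboid_iff_poly_root :
    PerfectCuboid ↔
      ∃ a b u : ℤ, 0 < a ∧ 0 < b ∧ 0 < u ∧
        Int.gcd a (Int.gcd b u) = 1 ∧
        ∃ t : ℚ, (a : ℚ) < t ∧ (b : ℚ) < t ∧ (u : ℚ) < t ∧
          ((a : ℚ) + t) * ((b : ℚ) + t) > 2 * t ^ 2 ∧
          Polynomial.aeval t (cuboidPoly a b u) = 0 := by
  constructor
  · rintro ⟨x₁, x₂, x₃, d₁, d₂, d₃, L, hx1, hx2, hx3, hd1, hd2, hd3, hL,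
      h1, h2, h3, h4⟩
    have hx1sq : 0 < x₁ ^ 2 := by positivity
    have hx2sq : 0 < x₂ ^ 2 := by positivity
    have hx3sq : 0 < x₃ ^ 2 := by positivity
    have hd1L : d₁ < L := lt_of_pow_lt_pow_left₀ 2 hL.le (by linarith)
    have hd2L : d₂ < L := lt_of_pow_lt_pow_left₀ 2 hL.le (by linarith)
    have hx3L : x₃ < L := lt_of_pow_lt_pow_left₀ 2 hL.le (by nlinarith)
    have hd1x2 : x₂ < d₁ := lt_of_pow_lt_pow_left₀ 2 hd1.le (by linarith)
    have hd2x1 : x₁ < d₂ := lt_of_pow_lt_pow_left₀ 2 hd2.le (by linarith)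
    have hprod : d₁ ^ 2 * d₂ ^ 2 = (x₂ ^ 2 + x₃ ^ 2) * (x₃ ^ 2 + x₁ ^ 2) := by
      rw [h1, h2]
    have hsq : (x₃ ^ 2 + x₁ * x₂) ^ 2 ≤ (d₁ * d₂) ^ 2 := by
      nlinarith [mul_nonneg (sq_nonneg x₃) (sq_nonneg (x₁ - x₂))]
    have hd1d2 : x₃ ^ 2 + x₁ * x₂ ≤ d₁ * d₂ :=
      le_of_pow_le_pow_left₀ two_ne_zero (mul_pos hd1 hd2).le hsq
    have hcore : 2 * ((L + x₁) * (L + x₂)) < (d₁ + (L + x₁)) * (d₂ + (L + x₂)) := by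
      nlinarith [mul_pos (sub_pos.mpr hd1x2) (show (0:ℤ) < L + x₂ by linarith),
        mul_pos (sub_pos.mpr hd2x1) (show (0:ℤ) < L + x₁ by linarith)]
    have hdd1 : d₁ ^ 2 = L ^ 2 - x₁ ^ 2 := by linarith
    have hdd2 : d₂ ^ 2 = L ^ 2 - x₂ ^ 2 := by linarith
    have hdd3 : x₃ ^ 2 = L ^ 2 - d₃ ^ 2 := by linarith
    obtain ⟨t', ht'⟩ : ∃ t' : ℤ, t' = (L + x₁) * ((L + x₂) * (L + d₃)) := ⟨_, rfl⟩
    obtain ⟨a', ha'⟩ : ∃ a' : ℤ, a' = d₁ * ((L + x₂) * (L + d₃)) := ⟨_, rfl⟩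
    obtain ⟨b', hb'⟩ : ∃ b' : ℤ, b' = (L + x₁) * (d₂ * (L + d₃)) := ⟨_, rfl⟩
    obtain ⟨u', hu'⟩ : ∃ u' : ℤ, u' = (L + x₁) * ((L + x₂) * x₃) := ⟨_, rfl⟩
    have hK : (0:ℤ) < (L + x₂) * (L + d₃) := mul_pos (by linarith) (by linarith)
    have ht'pos : 0 < t' := ht' ▸ mul_pos (by linarith) hK
    have ha'pos : 0 < a' := ha' ▸ mul_pos hd1 hK
    have hb'pos : 0 < b' := hb' ▸ mul_pos (by linarith) (mul_pos hd2 (by linarith))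
    have hu'pos : 0 < u' := hu' ▸ mul_pos (by linarith) (mul_pos (by linarith) hx3)
    have hat : a' < t' := by
      have e : t' - a' = (L + x₁ - d₁) * ((L + x₂) * (L + d₃)) := by
        rw [ht', ha']; ring
      have := mul_pos (show (0:ℤ) < L + x₁ - d₁ by linarith) hK
      linarith
    have hbt : b' < t' := by
      have e : t' - b' = (L + x₁) * ((L + x₂ - d₂) * (L + d₃)) := by
        rw [ht', hb']; ring
      have := mul_pos (show (0:ℤ) < L + x₁ by linarith)
        (mul_pos (show (0:ℤ) < L + x₂ - d₂ by linarith) (show (0:ℤ) < L + d₃ by linarith))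
      linarith
    have hut : u' < t' := by
      have e : t' - u' = (L + x₁) * ((L + x₂) * (L + d₃ - x₃)) := by
        rw [ht', hu']; ring
      have := mul_pos (show (0:ℤ) < L + x₁ by linarith)
        (mul_pos (show (0:ℤ) < L + x₂ by linarith) (show (0:ℤ) < L + d₃ - x₃ by linarith))
      linarith
    obtain ⟨g, hg⟩ : ∃ g : ℕ, g = Int.gcd a' (Int.gcd b' u') := ⟨_, rfl⟩
    obtain ⟨G, hG⟩ : ∃ G : ℤ, G = (g : ℤ) := ⟨_, rfl⟩
    have hgpos : 0 < g := hg ▸ Int.gcd_pos_of_ne_zero_left _ (ne_of_gt ha'pos)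
    have hGpos : (0:ℤ) < G := by rw [hG]; exact_mod_cast hgpos
    have hdvda : G ∣ a' := by rw [hG, hg]; exact Int.gcd_dvd_left _ _
    have hdvdbu : G ∣ (Int.gcd b' u' : ℤ) := by rw [hG, hg]; exact Int.gcd_dvd_right _ _
    have hdvdb : G ∣ b' := hdvdbu.trans (Int.gcd_dvd_left _ _)
    have hdvdu : G ∣ u' := hdvdbu.trans (Int.gcd_dvd_right _ _)
    obtain ⟨aI, haIdef⟩ : ∃ aI : ℤ, aI = a' / G := ⟨_, rfl⟩
    obtain ⟨bI, hbIdef⟩ : ∃ bI : ℤ, bI = b' / G := ⟨_, rfl⟩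
    obtain ⟨uI, huIdef⟩ : ∃ uI : ℤ, uI = u' / G := ⟨_, rfl⟩
    have haI : G * aI = a' := haIdef ▸ Int.mul_ediv_cancel' hdvda
    have hbI : G * bI = b' := hbIdef ▸ Int.mul_ediv_cancel' hdvdb
    have huI : G * uI = u' := huIdef ▸ Int.mul_ediv_cancel' hdvdu
    have haIpos : 0 < aI := by
      have h' : G * 0 < G * aI := by rw [mul_zero, haI]; exact ha'pos
      exact lt_of_mul_lt_mul_left h' hGpos.le
    have hbIpos : 0 < bI := by
      have h' : G * 0 < G * bI := by rw [mul_zero, hbI]; exact hb'pos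
      exact lt_of_mul_lt_mul_left h' hGpos.le
    have huIpos : 0 < uI := by
      have h' : G * 0 < G * uI := by rw [mul_zero, huI]; exact hu'pos
      exact lt_of_mul_lt_mul_left h' hGpos.le
    have hgcd : Int.gcd aI (Int.gcd bI uI) = 1 := by
      have e1 : Int.gcd bI uI = Int.gcd b' u' / g := by
        rw [hbIdef, huIdef]
        rw [Int.gcd_div hdvdb hdvdu, hG, Int.natAbs_natCast]
      have e2 : ((Int.gcd bI uI : ℕ) : ℤ) = (Int.gcd b' u' : ℤ) / G := by
        rw [e1, hG]
        exact Int.natCast_ediv _ _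
      rw [haIdef, e2, Int.gcd_div hdvda hdvdbu, hG, Int.natAbs_natCast, ← hg]
      exact Nat.div_self hgpos
    have hGQ : ((G:ℤ):ℚ) ≠ 0 := by
      exact_mod_cast (ne_of_gt hGpos)
    have hGQpos : (0:ℚ) < ((G:ℤ):ℚ) := by exact_mod_cast hGpos
    refine ⟨aI, bI, uI, haIpos, hbIpos, huIpos, hgcd,
      ((t':ℤ):ℚ) / ((G:ℤ):ℚ), ?_, ?_, ?_, ?_, ?_⟩
    · rw [lt_div_iff₀ hGQpos]
      have : aI * G < t' := by rw [mul_comm, haI]; exact hat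
      exact_mod_cast this
    · rw [lt_div_iff₀ hGQpos]
      have : bI * G < t' := by rw [mul_comm, hbI]; exact hbt
      exact_mod_cast this
    · rw [lt_div_iff₀ hGQpos]
      have : uI * G < t' := by rw [mul_comm, huI]; exact hut
      exact_mod_cast this
    · -- (a+t)(b+t) > 2t²
      have hcoreZ : 2 * t' ^ 2 < (a' + t') * (b' + t') := by
        have e : (a' + t') * (b' + t') - 2 * t' ^ 2 =
            ((L + x₁) * (L + x₂) * (L + d₃) ^ 2) *
              ((d₁ + (L + x₁)) * (d₂ + (L + x₂)) - 2 * ((L + x₁) * (L + x₂))) := by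
          rw [ht', ha', hb']; ring
        have hpos : 0 < ((L + x₁) * (L + x₂) * (L + d₃) ^ 2) *
            ((d₁ + (L + x₁)) * (d₂ + (L + x₂)) - 2 * ((L + x₁) * (L + x₂))) :=
          mul_pos (mul_pos (mul_pos (by linarith) (by linarith)) (by positivity))
            (by linarith)
        linarith
      have haQ : ((aI:ℤ):ℚ) * ((G:ℤ):ℚ) = ((a':ℤ):ℚ) := by
        exact_mod_cast (by rw [mul_comm]; exact haI : aI * G = a')
      have hbQ : ((bI:ℤ):ℚ) * ((G:ℤ):ℚ) = ((b':ℤ):ℚ) := by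
        exact_mod_cast (by rw [mul_comm]; exact hbI : bI * G = b')
      have haQdiv : ((aI:ℤ):ℚ) = ((a':ℤ):ℚ) / ((G:ℤ):ℚ) := by
        rw [eq_div_iff hGQ]; exact haQ
      have hbQdiv : ((bI:ℤ):ℚ) = ((b':ℤ):ℚ) / ((G:ℤ):ℚ) := by
        rw [eq_div_iff hGQ]; exact hbQ
      have expand : (((aI:ℤ):ℚ) + ((t':ℤ):ℚ)/((G:ℤ):ℚ)) * (((bI:ℤ):ℚ) + ((t':ℤ):ℚ)/((G:ℤ):ℚ))
          - 2 * (((t':ℤ):ℚ)/((G:ℤ):ℚ)) ^ 2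
          = ((((a':ℤ):ℚ) + ((t':ℤ):ℚ)) * (((b':ℤ):ℚ) + ((t':ℤ):ℚ)) - 2 * ((t':ℤ):ℚ) ^ 2)
            / ((G:ℤ):ℚ) ^ 2 := by
        rw [haQdiv, hbQdiv]
        field_simp
      have hnum : (0:ℚ) < (((a':ℤ):ℚ) + ((t':ℤ):ℚ)) * (((b':ℤ):ℚ) + ((t':ℤ):ℚ))
          - 2 * ((t':ℤ):ℚ) ^ 2 := by
        have : ((2 * t' ^ 2 : ℤ):ℚ) < (((a' + t') * (b' + t') : ℤ):ℚ) := by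
          exact_mod_cast hcoreZ
        push_cast at this
        linarith
      have := div_pos hnum (by positivity : (0:ℚ) < ((G:ℤ):ℚ) ^ 2)
      rw [← expand] at this
      linarith
    · -- the polynomial root
      rw [cuboidPoly_aeval]
      set T : ℚ := ((t':ℤ):ℚ) / ((G:ℤ):ℚ) with hT
      have htG : T * ((G:ℤ):ℚ) = ((t':ℤ):ℚ) := div_mul_cancel₀ _ hGQ
      have haQ : ((aI:ℤ):ℚ) * ((G:ℤ):ℚ) = ((a':ℤ):ℚ) := by
        exact_mod_cast (by rw [mul_comm]; exact haI : aI * G = a')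
      have hbQ : ((bI:ℤ):ℚ) * ((G:ℤ):ℚ) = ((b':ℤ):ℚ) := by
        exact_mod_cast (by rw [mul_comm]; exact hbI : bI * G = b')
      have huQ : ((uI:ℤ):ℚ) * ((G:ℤ):ℚ) = ((u':ℤ):ℚ) := by
        exact_mod_cast (by rw [mul_comm]; exact huI : uI * G = u')
      have hz1 : (t' ^ 2 - a' ^ 2) * L = (t' ^ 2 + a' ^ 2) * x₁ := by
        rw [ht', ha']
        linear_combination (-(((L + x₂) * (L + d₃)) ^ 2 * (L + x₁))) * hdd1
      have hz2 : (t' ^ 2 - b' ^ 2) * L = (t' ^ 2 + b' ^ 2) * x₂ := by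
        rw [ht', hb']
        linear_combination (-(((L + x₁) * (L + d₃)) ^ 2 * (L + x₂))) * hdd2
      have hz3 : (t' ^ 2 - u' ^ 2) * L = (t' ^ 2 + u' ^ 2) * d₃ := by
        rw [ht', hu']
        linear_combination (-(((L + x₁) * (L + x₂)) ^ 2 * (L + d₃))) * hdd3
      have hz1Q : (((t':ℤ):ℚ) ^ 2 - ((a':ℤ):ℚ) ^ 2) * ((L:ℤ):ℚ)
          = (((t':ℤ):ℚ) ^ 2 + ((a':ℤ):ℚ) ^ 2) * ((x₁:ℤ):ℚ) := by exact_mod_cast hz1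
      have hz2Q : (((t':ℤ):ℚ) ^ 2 - ((b':ℤ):ℚ) ^ 2) * ((L:ℤ):ℚ)
          = (((t':ℤ):ℚ) ^ 2 + ((b':ℤ):ℚ) ^ 2) * ((x₂:ℤ):ℚ) := by exact_mod_cast hz2
      have hz3Q : (((t':ℤ):ℚ) ^ 2 - ((u':ℤ):ℚ) ^ 2) * ((L:ℤ):ℚ)
          = (((t':ℤ):ℚ) ^ 2 + ((u':ℤ):ℚ) ^ 2) * ((d₃:ℤ):ℚ) := by exact_mod_cast hz3
      have r1' : ((T ^ 2 - ((aI:ℤ):ℚ) ^ 2) * ((L:ℤ):ℚ)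
          - (T ^ 2 + ((aI:ℤ):ℚ) ^ 2) * ((x₁:ℤ):ℚ)) * ((G:ℤ):ℚ) ^ 2 = 0 := by
        linear_combination hz1Q
          + ((((L:ℤ):ℚ) - ((x₁:ℤ):ℚ)) * (T * ((G:ℤ):ℚ) + ((t':ℤ):ℚ))) * htG
          - ((((L:ℤ):ℚ) + ((x₁:ℤ):ℚ)) * (((aI:ℤ):ℚ) * ((G:ℤ):ℚ) + ((a':ℤ):ℚ))) * haQ
      have r2' : ((T ^ 2 - ((bI:ℤ):ℚ) ^ 2) * ((L:ℤ):ℚ)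
          - (T ^ 2 + ((bI:ℤ):ℚ) ^ 2) * ((x₂:ℤ):ℚ)) * ((G:ℤ):ℚ) ^ 2 = 0 := by
        linear_combination hz2Q
          + ((((L:ℤ):ℚ) - ((x₂:ℤ):ℚ)) * (T * ((G:ℤ):ℚ) + ((t':ℤ):ℚ))) * htG
          - ((((L:ℤ):ℚ) + ((x₂:ℤ):ℚ)) * (((bI:ℤ):ℚ) * ((G:ℤ):ℚ) + ((b':ℤ):ℚ))) * hbQ
      have r3' : ((T ^ 2 - ((uI:ℤ):ℚ) ^ 2) * ((L:ℤ):ℚ)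
          - (T ^ 2 + ((uI:ℤ):ℚ) ^ 2) * ((d₃:ℤ):ℚ)) * ((G:ℤ):ℚ) ^ 2 = 0 := by
        linear_combination hz3Q
          + ((((L:ℤ):ℚ) - ((d₃:ℤ):ℚ)) * (T * ((G:ℤ):ℚ) + ((t':ℤ):ℚ))) * htG
          - ((((L:ℤ):ℚ) + ((d₃:ℤ):ℚ)) * (((uI:ℤ):ℚ) * ((G:ℤ):ℚ) + ((u':ℤ):ℚ))) * huQ
      have hG2 : ((G:ℤ):ℚ) ^ 2 ≠ 0 := pow_ne_zero _ hGQ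
      have r1 : (T ^ 2 - ((aI:ℤ):ℚ) ^ 2) * ((L:ℤ):ℚ)
          = (T ^ 2 + ((aI:ℤ):ℚ) ^ 2) * ((x₁:ℤ):ℚ) :=
        sub_eq_zero.mp ((mul_eq_zero.mp r1').resolve_right hG2)
      have r2 : (T ^ 2 - ((bI:ℤ):ℚ) ^ 2) * ((L:ℤ):ℚ)
          = (T ^ 2 + ((bI:ℤ):ℚ) ^ 2) * ((x₂:ℤ):ℚ) :=
        sub_eq_zero.mp ((mul_eq_zero.mp r2').resolve_right hG2)
      have r3 : (T ^ 2 - ((uI:ℤ):ℚ) ^ 2) * ((L:ℤ):ℚ)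
          = (T ^ 2 + ((uI:ℤ):ℚ) ^ 2) * ((d₃:ℤ):ℚ) :=
        sub_eq_zero.mp ((mul_eq_zero.mp r3').resolve_right hG2)
      have hsumQ : ((x₁:ℤ):ℚ) ^ 2 + ((x₂:ℤ):ℚ) ^ 2 = ((d₃:ℤ):ℚ) ^ 2 := by
        exact_mod_cast h3
      have hLQ : ((L:ℤ):ℚ) ≠ 0 := by
        exact_mod_cast (ne_of_gt hL)
      have hEL : ((T ^ 2 - ((aI:ℤ):ℚ) ^ 2) ^ 2 * (T ^ 2 + ((bI:ℤ):ℚ) ^ 2) ^ 2 * (T ^ 2 + ((uI:ℤ):ℚ) ^ 2) ^ 2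
          + (T ^ 2 + ((aI:ℤ):ℚ) ^ 2) ^ 2 * (T ^ 2 - ((bI:ℤ):ℚ) ^ 2) ^ 2 * (T ^ 2 + ((uI:ℤ):ℚ) ^ 2) ^ 2
          - (T ^ 2 + ((aI:ℤ):ℚ) ^ 2) ^ 2 * (T ^ 2 + ((bI:ℤ):ℚ) ^ 2) ^ 2 * (T ^ 2 - ((uI:ℤ):ℚ) ^ 2) ^ 2)
          * ((L:ℤ):ℚ) ^ 2 = 0 := by
        linear_combination
          (((T ^ 2 - ((aI:ℤ):ℚ) ^ 2) * ((L:ℤ):ℚ) + (T ^ 2 + ((aI:ℤ):ℚ) ^ 2) * ((x₁:ℤ):ℚ))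
            * (T ^ 2 + ((bI:ℤ):ℚ) ^ 2) ^ 2 * (T ^ 2 + ((uI:ℤ):ℚ) ^ 2) ^ 2) * r1
          + ((T ^ 2 + ((aI:ℤ):ℚ) ^ 2) ^ 2
            * ((T ^ 2 - ((bI:ℤ):ℚ) ^ 2) * ((L:ℤ):ℚ) + (T ^ 2 + ((bI:ℤ):ℚ) ^ 2) * ((x₂:ℤ):ℚ))
            * (T ^ 2 + ((uI:ℤ):ℚ) ^ 2) ^ 2) * r2
          - ((T ^ 2 + ((aI:ℤ):ℚ) ^ 2) ^ 2 * (T ^ 2 + ((bI:ℤ):ℚ) ^ 2) ^ 2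
            * ((T ^ 2 - ((uI:ℤ):ℚ) ^ 2) * ((L:ℤ):ℚ) + (T ^ 2 + ((uI:ℤ):ℚ) ^ 2) * ((d₃:ℤ):ℚ))) * r3
          + ((T ^ 2 + ((aI:ℤ):ℚ) ^ 2) ^ 2 * (T ^ 2 + ((bI:ℤ):ℚ) ^ 2) ^ 2
            * (T ^ 2 + ((uI:ℤ):ℚ) ^ 2) ^ 2) * hsumQ
      exact (mul_eq_zero.mp hEL).resolve_right (pow_ne_zero 2 hLQ)
  · rintro ⟨a, b, u, ha, hb, hu, -, t, hta, htb, htu, -, hP⟩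
    rw [cuboidPoly_aeval] at hP
    have ht0 : 0 < t := lt_trans (by exact_mod_cast ha) hta
    obtain ⟨p, hpdef⟩ : ∃ p : ℤ, p = t.num := ⟨_, rfl⟩
    obtain ⟨q, hqdef⟩ : ∃ q : ℤ, q = (t.den : ℤ) := ⟨_, rfl⟩
    have hq : 0 < q := by rw [hqdef]; exact_mod_cast t.den_pos
    have hp : 0 < p := by rw [hpdef]; exact Rat.num_pos.mpr ht0
    have hqQ : ((q:ℤ):ℚ) ≠ 0 := by exact_mod_cast (ne_of_gt hq)
    have hpq : ((p:ℤ):ℚ) = t * ((q:ℤ):ℚ) := by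
      rw [hpdef, hqdef]
      push_cast
      rw [← div_eq_iff (by exact_mod_cast t.den_ne_zero : ((t.den:ℚ)) ≠ 0)]
      exact Rat.num_div_den t
    have haq : a * q < p := by
      have h' : (a:ℚ) * ((q:ℤ):ℚ) < t * ((q:ℤ):ℚ) :=
        mul_lt_mul_of_pos_right hta (by exact_mod_cast hq)
      rw [← hpq] at h'
      exact_mod_cast h'
    have hbq : b * q < p := by
      have h' : (b:ℚ) * ((q:ℤ):ℚ) < t * ((q:ℤ):ℚ) :=
        mul_lt_mul_of_pos_right htb (by exact_mod_cast hq)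
      rw [← hpq] at h'
      exact_mod_cast h'
    have huq : u * q < p := by
      have h' : (u:ℚ) * ((q:ℤ):ℚ) < t * ((q:ℤ):ℚ) :=
        mul_lt_mul_of_pos_right htu (by exact_mod_cast hq)
      rw [← hpq] at h'
      exact_mod_cast h'
    have hpa : 0 < p ^ 2 - a ^ 2 * q ^ 2 := by
      nlinarith [mul_pos (sub_pos.mpr haq) (add_pos hp (mul_pos ha hq))]
    have hpb : 0 < p ^ 2 - b ^ 2 * q ^ 2 := by
      nlinarith [mul_pos (sub_pos.mpr hbq) (add_pos hp (mul_pos hb hq))]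
    have hpu : 0 < p ^ 2 - u ^ 2 * q ^ 2 := by
      nlinarith [mul_pos (sub_pos.mpr huq) (add_pos hp (mul_pos hu hq))]
    have hA : (0:ℤ) < p ^ 2 + a ^ 2 * q ^ 2 := by positivity
    have hB : (0:ℤ) < p ^ 2 + b ^ 2 * q ^ 2 := by positivity
    have hU : (0:ℤ) < p ^ 2 + u ^ 2 * q ^ 2 := by positivity
    refine ⟨(p ^ 2 - a ^ 2 * q ^ 2) * ((p ^ 2 + b ^ 2 * q ^ 2) * (p ^ 2 + u ^ 2 * q ^ 2)),
      (p ^ 2 + a ^ 2 * q ^ 2) * ((p ^ 2 - b ^ 2 * q ^ 2) * (p ^ 2 + u ^ 2 * q ^ 2)),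
      2 * u * p * q * ((p ^ 2 + a ^ 2 * q ^ 2) * (p ^ 2 + b ^ 2 * q ^ 2)),
      2 * a * p * q * ((p ^ 2 + b ^ 2 * q ^ 2) * (p ^ 2 + u ^ 2 * q ^ 2)),
      2 * b * p * q * ((p ^ 2 + a ^ 2 * q ^ 2) * (p ^ 2 + u ^ 2 * q ^ 2)),
      (p ^ 2 + a ^ 2 * q ^ 2) * ((p ^ 2 + b ^ 2 * q ^ 2) * (p ^ 2 - u ^ 2 * q ^ 2)),
      (p ^ 2 + a ^ 2 * q ^ 2) * ((p ^ 2 + b ^ 2 * q ^ 2) * (p ^ 2 + u ^ 2 * q ^ 2)),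
      mul_pos hpa (mul_pos hB hU),
      mul_pos hA (mul_pos hpb hU),
      mul_pos (mul_pos (mul_pos (mul_pos two_pos hu) hp) hq) (mul_pos hA hB),
      mul_pos (mul_pos (mul_pos (mul_pos two_pos ha) hp) hq) (mul_pos hB hU),
      mul_pos (mul_pos (mul_pos (mul_pos two_pos hb) hp) hq) (mul_pos hA hU),
      mul_pos hA (mul_pos hB hpu),
      mul_pos hA (mul_pos hB hU), ?_, ?_, ?_, ?_⟩
    · have h : ((((p:ℤ):ℚ) ^ 2 + (a:ℚ) ^ 2 * ((q:ℤ):ℚ) ^ 2) * ((((p:ℤ):ℚ) ^ 2 - (b:ℚ) ^ 2 * ((q:ℤ):ℚ) ^ 2) * (((p:ℤ):ℚ) ^ 2 + (u:ℚ) ^ 2 * ((q:ℤ):ℚ) ^ 2))) ^ 2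
          + (2 * (u:ℚ) * ((p:ℤ):ℚ) * ((q:ℤ):ℚ) * ((((p:ℤ):ℚ) ^ 2 + (a:ℚ) ^ 2 * ((q:ℤ):ℚ) ^ 2) * (((p:ℤ):ℚ) ^ 2 + (b:ℚ) ^ 2 * ((q:ℤ):ℚ) ^ 2))) ^ 2
          = (2 * (a:ℚ) * ((p:ℤ):ℚ) * ((q:ℤ):ℚ) * ((((p:ℤ):ℚ) ^ 2 + (b:ℚ) ^ 2 * ((q:ℤ):ℚ) ^ 2) * (((p:ℤ):ℚ) ^ 2 + (u:ℚ) ^ 2 * ((q:ℤ):ℚ) ^ 2))) ^ 2 := by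
        rw [hpq]
        linear_combination ((q:ℤ):ℚ) ^ 12 * hP
      exact_mod_cast h
    · have h : ((2 * (u:ℚ) * ((p:ℤ):ℚ) * ((q:ℤ):ℚ) * ((((p:ℤ):ℚ) ^ 2 + (a:ℚ) ^ 2 * ((q:ℤ):ℚ) ^ 2) * (((p:ℤ):ℚ) ^ 2 + (b:ℚ) ^ 2 * ((q:ℤ):ℚ) ^ 2))) ^ 2
          + ((((p:ℤ):ℚ) ^ 2 - (a:ℚ) ^ 2 * ((q:ℤ):ℚ) ^ 2) * ((((p:ℤ):ℚ) ^ 2 + (b:ℚ) ^ 2 * ((q:ℤ):ℚ) ^ 2) * (((p:ℤ):ℚ) ^ 2 + (u:ℚ) ^ 2 * ((q:ℤ):ℚ) ^ 2))) ^ 2)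
          = (2 * (b:ℚ) * ((p:ℤ):ℚ) * ((q:ℤ):ℚ) * ((((p:ℤ):ℚ) ^ 2 + (a:ℚ) ^ 2 * ((q:ℤ):ℚ) ^ 2) * (((p:ℤ):ℚ) ^ 2 + (u:ℚ) ^ 2 * ((q:ℤ):ℚ) ^ 2))) ^ 2 := by
        rw [hpq]
        linear_combination ((q:ℤ):ℚ) ^ 12 * hP
      exact_mod_cast h
    · have h : (((((p:ℤ):ℚ) ^ 2 - (a:ℚ) ^ 2 * ((q:ℤ):ℚ) ^ 2) * ((((p:ℤ):ℚ) ^ 2 + (b:ℚ) ^ 2 * ((q:ℤ):ℚ) ^ 2) * (((p:ℤ):ℚ) ^ 2 + (u:ℚ) ^ 2 * ((q:ℤ):ℚ) ^ 2))) ^ 2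
          + ((((p:ℤ):ℚ) ^ 2 + (a:ℚ) ^ 2 * ((q:ℤ):ℚ) ^ 2) * ((((p:ℤ):ℚ) ^ 2 - (b:ℚ) ^ 2 * ((q:ℤ):ℚ) ^ 2) * (((p:ℤ):ℚ) ^ 2 + (u:ℚ) ^ 2 * ((q:ℤ):ℚ) ^ 2))) ^ 2)
          = ((((p:ℤ):ℚ) ^ 2 + (a:ℚ) ^ 2 * ((q:ℤ):ℚ) ^ 2) * ((((p:ℤ):ℚ) ^ 2 + (b:ℚ) ^ 2 * ((q:ℤ):ℚ) ^ 2) * (((p:ℤ):ℚ) ^ 2 - (u:ℚ) ^ 2 * ((q:ℤ):ℚ) ^ 2))) ^ 2 := by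
        rw [hpq]
        linear_combination ((q:ℤ):ℚ) ^ 12 * hP
      exact_mod_cast h
    · have h : (((((p:ℤ):ℚ) ^ 2 - (a:ℚ) ^ 2 * ((q:ℤ):ℚ) ^ 2) * ((((p:ℤ):ℚ) ^ 2 + (b:ℚ) ^ 2 * ((q:ℤ):ℚ) ^ 2) * (((p:ℤ):ℚ) ^ 2 + (u:ℚ) ^ 2 * ((q:ℤ):ℚ) ^ 2))) ^ 2
          + ((((p:ℤ):ℚ) ^ 2 + (a:ℚ) ^ 2 * ((q:ℤ):ℚ) ^ 2) * ((((p:ℤ):ℚ) ^ 2 - (b:ℚ) ^ 2 * ((q:ℤ):ℚ) ^ 2) * (((p:ℤ):ℚ) ^ 2 + (u:ℚ) ^ 2 * ((q:ℤ):ℚ) ^ 2))) ^ 2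
          + (2 * (u:ℚ) * ((p:ℤ):ℚ) * ((q:ℤ):ℚ) * ((((p:ℤ):ℚ) ^ 2 + (a:ℚ) ^ 2 * ((q:ℤ):ℚ) ^ 2) * (((p:ℤ):ℚ) ^ 2 + (b:ℚ) ^ 2 * ((q:ℤ):ℚ) ^ 2))) ^ 2)
          = ((((p:ℤ):ℚ) ^ 2 + (a:ℚ) ^ 2 * ((q:ℤ):ℚ) ^ 2) * ((((p:ℤ):ℚ) ^ 2 + (b:ℚ) ^ 2 * ((q:ℤ):ℚ) ^ 2) * (((p:ℤ):ℚ) ^ 2 + (u:ℚ) ^ 2 * ((q:ℤ):ℚ) ^ 2))) ^ 2 := by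
        rw [hpq]
        linear_combination ((q:ℤ):ℚ) ^ 12 * hP
      exact_mod_cast h
end

section
/- For all integers p and q, the identity P_{pq,p²,q²}(t) = (t − pq)·(t + pq)·Q_{p,q}(t) holds in ℤ[t]. -/
open Polynomial

/-- The polynomial `Q_{p,q}(t) ∈ ℤ[t]`. -/
noncomputable def cuboidPolyQ (p q : ℤ) : Polynomial ℤ :=
  X ^ 10 + C ((2 * q ^ 2 + p ^ 2) * (3 * q ^ 2 - 2 * p ^ 2)) * X ^ 8
    + C (q ^ 8 + 10 * p ^ 2 * q ^ 6 + 4 * p ^ 4 * q ^ 4 - 14 * p ^ 6 * q ^ 2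
        + p ^ 8) * X ^ 6
    - C (p ^ 2 * q ^ 2 * (q ^ 8 - 14 * p ^ 2 * q ^ 6 + 4 * p ^ 4 * q ^ 4
        + 10 * p ^ 6 * q ^ 2 + p ^ 8)) * X ^ 4
    - C (p ^ 6 * q ^ 6 * (q ^ 2 + 2 * p ^ 2) * (3 * p ^ 2 - 2 * q ^ 2)) * X ^ 2
    - C (p ^ 10 * q ^ 10)

theorem cuboidPoly_special_factorization (p q : ℤ) :
    cuboidPoly (p * q) (p ^ 2) (q ^ 2)
      = (X - C (p * q)) * (X + C (p * q)) * cuboidPolyQ p q := by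
  apply Polynomial.funext
  intro x
  simp only [cuboidPoly, cuboidPolyQ, eval_add, eval_sub, eval_mul, eval_pow, eval_C, eval_X]
  ring
end
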